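/- Let φ be a smooth nonnegative function on ℂ and a a complex constant. For every compactly supported smooth function ψ : ℂ → ℂ, one has ‖(∂̄^{*}_φ + a)ψ‖²_φ ≥ ∫_ℂ |ψ|² (∂∂̄φ) e^{-φ} dσ, i.e., the weighted L² norm of (∂̄^{*}_φ + a)ψ squared is at least ‖ψ √(∂∂̄φ)‖²_φ. -/

import Mathlib

open MeasureTheory Complex ComplexConjugate

/-- The Wirtinger derivative `∂ = (1/2)(∂/∂x - i ∂/∂y)`. -/
noncomputable def wD (f : ℂ → ℂ) (z : ℂ) : ℂ :=
  (1 / 2 : ℂ) * (fderiv ℝ f z 1 - Complex.I * fderiv ℝ f z Complex.I)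

/-- The Cauchy–Riemann operator `∂̄ = (1/2)(∂/∂x + i ∂/∂y)`. -/
noncomputable def wDbar (f : ℂ → ℂ) (z : ℂ) : ℂ :=
  (1 / 2 : ℂ) * (fderiv ℝ f z 1 + Complex.I * fderiv ℝ f z Complex.I)

/-- `f` is locally square integrable on `ℂ` (w.r.t. Lebesgue measure). -/
def MemL2loc (f : ℂ → ℂ) : Prop :=
  AEStronglyMeasurable f volume ∧
    ∀ K : Set ℂ, IsCompact K → IntegrableOn (fun z => ‖f z‖ ^ 2) K volume

/-- `f ∈ L²(ℂ, e^{-φ})`: locally square integrable with finite weighted `L²` norm. -/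
def MemL2w (φ : ℂ → ℝ) (f : ℂ → ℂ) : Prop :=
  MemL2loc f ∧ Integrable (fun z => ‖f z‖ ^ 2 * Real.exp (-φ z)) volume

/-- `∂̄^k u = f` holds in the weak (distributional) sense on `ℂ`:
`∫ u ∂̄^k ψ = (-1)^k ∫ f ψ` for all compactly supported smooth test functions `ψ`. -/
def WeakDbarPow (k : ℕ) (u f : ℂ → ℂ) : Prop :=
  ∀ ψ : ℂ → ℂ, ContDiff ℝ (⊤ : ℕ∞) ψ → HasCompactSupport ψ →
    ∫ z, u z * (wDbar^[k] ψ) z = (-1 : ℂ) ^ k * ∫ z, f z * ψ z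

/-- The formal adjoint `∂̄^{k*}_φ ψ = (-1)^k e^{φ} ∂^k (ψ e^{-φ})` of `∂̄^k` with
respect to the weight `e^{-φ}`. -/
noncomputable def adjDbar (φ : ℂ → ℝ) (k : ℕ) (ψ : ℂ → ℂ) : ℂ → ℂ := fun z =>
  (-1 : ℂ) ^ k * (Real.exp (φ z) : ℂ) *
    wD^[k] (fun w => ψ w * (Real.exp (-φ w) : ℂ)) z

/-- The weighted inner product `⟨f, g⟩_φ = ∫ conj(f) g e^{-φ} dσ`. -/
noncomputable def wip (φ : ℂ → ℝ) (f g : ℂ → ℂ) : ℂ :=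
  ∫ z, conj (f z) * g z * (Real.exp (-φ z) : ℂ)

/-! ### Auxiliary lemmas on Wirtinger derivatives -/

namespace APrioriAux

variable {f g : ℂ → ℂ} {z v : ℂ}

theorem le_top' {n : ℕ∞} : (n : WithTop ℕ∞) ≤ ((⊤ : ℕ∞) : WithTop ℕ∞) :=
  WithTop.coe_le_coe.2 le_top

theorem one_le_top : (1 : WithTop ℕ∞) ≤ ((⊤ : ℕ∞) : WithTop ℕ∞) := le_top'

theorem fderiv_apply_smooth (hf : ContDiff ℝ (⊤:ℕ∞) f) (v : ℂ) :
    ContDiff ℝ (⊤:ℕ∞) fun z => fderiv ℝ f z v :=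
  ((hf.fderiv_right (by simp)).clm_apply contDiff_const)

theorem wD_smooth (hf : ContDiff ℝ (⊤:ℕ∞) f) : ContDiff ℝ (⊤:ℕ∞) (wD f) :=
  contDiff_const.mul ((fderiv_apply_smooth hf 1).sub
    (contDiff_const.mul (fderiv_apply_smooth hf Complex.I)))

theorem wDbar_smooth (hf : ContDiff ℝ (⊤:ℕ∞) f) : ContDiff ℝ (⊤:ℕ∞) (wDbar f) :=
  contDiff_const.mul ((fderiv_apply_smooth hf 1).add
    (contDiff_const.mul (fderiv_apply_smooth hf Complex.I)))

theorem diffAt (hf : ContDiff ℝ (⊤:ℕ∞) f) : DifferentiableAt ℝ f z :=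
  (hf.differentiable (by simp)) z

theorem fderiv_mul_apply (hf : DifferentiableAt ℝ f z) (hg : DifferentiableAt ℝ g z) (v : ℂ) :
    fderiv ℝ (fun w => f w * g w) z v = fderiv ℝ f z v * g z + f z * fderiv ℝ g z v := by
  rw [fderiv_fun_mul hf hg]
  simp [smul_eq_mul]
  ring

theorem wD_mul (hf : DifferentiableAt ℝ f z) (hg : DifferentiableAt ℝ g z) :
    wD (fun w => f w * g w) z = wD f z * g z + f z * wD g z := by
  simp only [wD, fderiv_mul_apply hf hg]; ring

theorem wDbar_mul (hf : DifferentiableAt ℝ f z) (hg : DifferentiableAt ℝ g z) :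
    wDbar (fun w => f w * g w) z = wDbar f z * g z + f z * wDbar g z := by
  simp only [wDbar, fderiv_mul_apply hf hg]; ring

theorem fderiv_conj_apply (v : ℂ) :
    fderiv ℝ (fun w => conj (f w)) z v = conj (fderiv ℝ f z v) := by
  have h : (fun w => conj (f w)) = fun w => star (f w) := rfl
  rw [h, fderiv_star]
  rfl

theorem conj_half : conj (1/2 : ℂ) = 1/2 := by simp [Complex.ext_iff]

theorem wD_conj : wD (fun w => conj (f w)) z = conj (wDbar f z) := by
  simp only [wD, wDbar, fderiv_conj_apply, map_mul, map_add, conj_half, Complex.conj_I]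
  ring

theorem wDbar_conj : wDbar (fun w => conj (f w)) z = conj (wD f z) := by
  simp only [wD, wDbar, fderiv_conj_apply, map_mul, map_sub, conj_half, Complex.conj_I]
  ring

theorem wD_cexp (hf : DifferentiableAt ℝ f z) :
    wD (fun w => Complex.exp (f w)) z = Complex.exp (f z) * wD f z := by
  have h := (hf.hasFDerivAt.cexp).fderiv
  simp only [wD, h, ContinuousLinearMap.coe_smul', Pi.smul_apply, smul_eq_mul]; ring

theorem wDbar_cexp (hf : DifferentiableAt ℝ f z) :
    wDbar (fun w => Complex.exp (f w)) z = Complex.exp (f z) * wDbar f z := by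
  have h := (hf.hasFDerivAt.cexp).fderiv
  simp only [wDbar, h, ContinuousLinearMap.coe_smul', Pi.smul_apply, smul_eq_mul]; ring

theorem wD_add (hf : DifferentiableAt ℝ f z) (hg : DifferentiableAt ℝ g z) :
    wD (fun w => f w + g w) z = wD f z + wD g z := by
  simp only [wD, fderiv_fun_add hf hg, ContinuousLinearMap.add_apply]; ring

theorem wDbar_add (hf : DifferentiableAt ℝ f z) (hg : DifferentiableAt ℝ g z) :
    wDbar (fun w => f w + g w) z = wDbar f z + wDbar g z := by
  simp only [wDbar, fderiv_fun_add hf hg, ContinuousLinearMap.add_apply]; ring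

theorem wD_neg : wD (fun w => -(f w)) z = -(wD f z) := by
  simp only [wD, fderiv_fun_neg, ContinuousLinearMap.neg_apply]; ring

theorem wDbar_neg : wDbar (fun w => -(f w)) z = -(wDbar f z) := by
  simp only [wDbar, fderiv_fun_neg, ContinuousLinearMap.neg_apply]; ring

theorem wD_const (c : ℂ) : wD (fun _ => c) z = 0 := by simp [wD]
theorem wDbar_const (c : ℂ) : wDbar (fun _ => c) z = 0 := by simp [wDbar]

theorem fderiv_fderiv_apply (hf : ContDiff ℝ (⊤:ℕ∞) f) (u v : ℂ) :
    fderiv ℝ (fun w => fderiv ℝ f w v) z u = fderiv ℝ (fderiv ℝ f) z u v := by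
  have hd : DifferentiableAt ℝ (fderiv ℝ f) z :=
    ((hf.fderiv_right (m := (⊤:ℕ∞)) (by simp)).differentiable (by simp)) z
  have h := ((ContinuousLinearMap.apply ℝ ℂ v).hasFDerivAt.comp z hd.hasFDerivAt).fderiv
  have he : (fun w => fderiv ℝ f w v) = (ContinuousLinearMap.apply ℝ ℂ v) ∘ (fderiv ℝ f) := rfl
  rw [he, h]; rfl

theorem sym2 (hf : ContDiff ℝ (⊤:ℕ∞) f) (u v : ℂ) :
    fderiv ℝ (fderiv ℝ f) z u v = fderiv ℝ (fderiv ℝ f) z v u :=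
  (hf.contDiffAt.isSymmSndFDerivAt (by rw [minSmoothness_of_isRCLikeNormedField]; exact le_top' (n := 2))) u v

theorem fderiv_wD_apply (hf : ContDiff ℝ (⊤:ℕ∞) f) (v : ℂ) :
    fderiv ℝ (wD f) z v = (1/2 : ℂ) *
      (fderiv ℝ (fderiv ℝ f) z v 1 - Complex.I * fderiv ℝ (fderiv ℝ f) z v Complex.I) := by
  have d1 : ∀ u, DifferentiableAt ℝ (fun w => fderiv ℝ f w u) z := fun u =>
    diffAt (fderiv_apply_smooth hf u)
  have e : wD f = fun w => (1/2:ℂ) * (fderiv ℝ f w 1 - Complex.I * fderiv ℝ f w Complex.I) := rfl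
  rw [e, fderiv_const_mul ((d1 1).fun_sub ((d1 Complex.I).const_mul Complex.I)),
    fderiv_fun_sub (d1 1) ((d1 Complex.I).const_mul Complex.I), fderiv_const_mul (d1 Complex.I)]
  simp only [ContinuousLinearMap.coe_smul', Pi.smul_apply, ContinuousLinearMap.coe_sub',
    Pi.sub_apply, smul_eq_mul, fderiv_fderiv_apply hf]

theorem fderiv_wDbar_apply (hf : ContDiff ℝ (⊤:ℕ∞) f) (v : ℂ) :
    fderiv ℝ (wDbar f) z v = (1/2 : ℂ) *
      (fderiv ℝ (fderiv ℝ f) z v 1 + Complex.I * fderiv ℝ (fderiv ℝ f) z v Complex.I) := by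
  have d1 : ∀ u, DifferentiableAt ℝ (fun w => fderiv ℝ f w u) z := fun u =>
    diffAt (fderiv_apply_smooth hf u)
  have e : wDbar f = fun w => (1/2:ℂ) * (fderiv ℝ f w 1 + Complex.I * fderiv ℝ f w Complex.I) := rfl
  rw [e, fderiv_const_mul ((d1 1).fun_add ((d1 Complex.I).const_mul Complex.I)),
    fderiv_fun_add (d1 1) ((d1 Complex.I).const_mul Complex.I), fderiv_const_mul (d1 Complex.I)]
  simp only [ContinuousLinearMap.coe_smul', Pi.smul_apply, ContinuousLinearMap.coe_add',
    Pi.add_apply, smul_eq_mul, fderiv_fderiv_apply hf]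

theorem wD_wDbar_comm (hf : ContDiff ℝ (⊤:ℕ∞) f) :
    wDbar (wD f) z = wD (wDbar f) z := by
  simp only [wD, wDbar, fderiv_wD_apply hf, fderiv_wDbar_apply hf]
  rw [sym2 hf Complex.I 1]
  ring

theorem hasCompactSupport_wD (hf : HasCompactSupport f) : HasCompactSupport (wD f) :=
  (hf.fderiv ℝ).comp_left
    (g := fun L : ℂ →L[ℝ] ℂ => (1/2:ℂ) * (L 1 - Complex.I * L Complex.I)) (by simp)

theorem hasCompactSupport_wDbar (hf : HasCompactSupport f) : HasCompactSupport (wDbar f) :=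
  (hf.fderiv ℝ).comp_left
    (g := fun L : ℂ →L[ℝ] ℂ => (1/2:ℂ) * (L 1 + Complex.I * L Complex.I)) (by simp)

theorem integrable_cc {f : ℂ → ℂ} (hc : Continuous f) (hs : HasCompactSupport f) :
    Integrable f volume :=
  hc.integrable_of_hasCompactSupport hs

theorem integral_fderiv_apply_eq_zero (hf : ContDiff ℝ (⊤:ℕ∞) f)
    (hs : HasCompactSupport f) (v : ℂ) : ∫ z, fderiv ℝ f z v = 0 := by
  have h1 : Integrable (fun x : ℂ => (fun _ : ℂ => (1:ℂ)) x * fderiv ℝ f x v) volume := by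
    simpa using integrable_cc ((fderiv_apply_smooth hf v).continuous) (hs.fderiv_apply ℝ v)
  have h2 : Integrable (fun x : ℂ => (fun _ : ℂ => (1:ℂ)) x * f x) volume := by
    simpa using integrable_cc (hf.continuous) hs
  have h0 : Integrable (fun x : ℂ => fderiv ℝ (fun _ : ℂ => (1:ℂ)) x v * f x) volume := by
    simp only [fderiv_fun_const]; simp
  have h := integral_mul_fderiv_eq_neg_fderiv_mul_of_integrable (μ := volume)
    (f := fun _ : ℂ => (1:ℂ)) (g := f) (v := v) h0 h1 h2
    (fun x _ => differentiableAt_const 1) (fun x _ => hf.differentiable (by simp) x)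
  simpa using h

theorem integral_wD_eq_zero (hf : ContDiff ℝ (⊤:ℕ∞) f) (hs : HasCompactSupport f) :
    ∫ z, wD f z = 0 := by
  have i1 : Integrable (fun z => fderiv ℝ f z 1) volume :=
    integrable_cc ((fderiv_apply_smooth hf 1).continuous) (hs.fderiv_apply ℝ 1)
  have i2 : Integrable (fun z => Complex.I * fderiv ℝ f z Complex.I) volume :=
    (integrable_cc ((fderiv_apply_smooth hf Complex.I).continuous)
      (hs.fderiv_apply ℝ Complex.I)).const_mul Complex.I
  have e : (fun z => wD f z) = fun z =>
      (1/2:ℂ) * (fderiv ℝ f z 1 - Complex.I * fderiv ℝ f z Complex.I) := rfl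
  rw [e]
  rw [integral_const_mul, integral_sub i1 i2, integral_const_mul,
    integral_fderiv_apply_eq_zero hf hs 1, integral_fderiv_apply_eq_zero hf hs Complex.I]
  simp

theorem integral_wDbar_eq_zero (hf : ContDiff ℝ (⊤:ℕ∞) f) (hs : HasCompactSupport f) :
    ∫ z, wDbar f z = 0 := by
  have i1 : Integrable (fun z => fderiv ℝ f z 1) volume :=
    integrable_cc ((fderiv_apply_smooth hf 1).continuous) (hs.fderiv_apply ℝ 1)
  have i2 : Integrable (fun z => Complex.I * fderiv ℝ f z Complex.I) volume :=
    (integrable_cc ((fderiv_apply_smooth hf Complex.I).continuous)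
      (hs.fderiv_apply ℝ Complex.I)).const_mul Complex.I
  have e : (fun z => wDbar f z) = fun z =>
      (1/2:ℂ) * (fderiv ℝ f z 1 + Complex.I * fderiv ℝ f z Complex.I) := rfl
  rw [e]
  rw [integral_const_mul, integral_add i1 i2, integral_const_mul,
    integral_fderiv_apply_eq_zero hf hs 1, integral_fderiv_apply_eq_zero hf hs Complex.I]
  simp

theorem coe_norm_sq (x : ℂ) : ((‖x‖^2 : ℝ) : ℂ) = conj x * x := by
  rw [mul_comm, Complex.mul_conj]
  norm_cast
  rw [Complex.normSq_eq_norm_sq]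

end APrioriAux

namespace APrioriAux

noncomputable def Phi (φ : ℂ → ℝ) : ℂ → ℂ := fun w => (φ w : ℂ)
noncomputable def ee (φ : ℂ → ℝ) : ℂ → ℂ := fun w => (Real.exp (-φ w) : ℂ)
noncomputable def TT (φ : ℂ → ℝ) (a : ℂ) (ψ : ℂ → ℂ) : ℂ → ℂ :=
  fun w => -(wD ψ w) + (wD (Phi φ) w + a) * ψ w
noncomputable def SS (a : ℂ) (ψ : ℂ → ℂ) : ℂ → ℂ :=
  fun w => wDbar ψ w + conj a * ψ w
noncomputable def AA (φ : ℂ → ℝ) (a : ℂ) (ψ : ℂ → ℂ) : ℂ → ℂ :=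
  fun w => conj (ψ w) * (ee φ w * TT φ a ψ w)
noncomputable def BB (φ : ℂ → ℝ) (a : ℂ) (ψ : ℂ → ℂ) : ℂ → ℂ :=
  fun w => conj (ψ w) * (SS a ψ w * ee φ w)

section main

variable {φ : ℂ → ℝ} {a : ℂ} {ψ : ℂ → ℂ}

theorem hPhi (hφs : ContDiff ℝ (⊤:ℕ∞) φ) : ContDiff ℝ (⊤:ℕ∞) (Phi φ) :=
  Complex.ofRealCLM.contDiff.comp hφs

theorem ee_eq : ee φ = fun w => Complex.exp (-(Phi φ w)) := by
  funext w
  show ((Real.exp (-φ w) : ℝ) : ℂ) = Complex.exp (-((φ w : ℝ) : ℂ))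
  rw [← Complex.ofReal_neg, Complex.ofReal_exp]

theorem hee (hφs : ContDiff ℝ (⊤:ℕ∞) φ) : ContDiff ℝ (⊤:ℕ∞) (ee φ) := by
  rw [ee_eq]
  exact (Complex.contDiff_exp (𝕜 := ℝ)).comp (hPhi hφs).neg

theorem hTT (hφs : ContDiff ℝ (⊤:ℕ∞) φ) (hψ1 : ContDiff ℝ (⊤:ℕ∞) ψ) :
    ContDiff ℝ (⊤:ℕ∞) (TT φ a ψ) :=
  ((wD_smooth hψ1).neg).add (((wD_smooth (hPhi hφs)).add contDiff_const).mul hψ1)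

theorem hSS (hψ1 : ContDiff ℝ (⊤:ℕ∞) ψ) : ContDiff ℝ (⊤:ℕ∞) (SS a ψ) :=
  (wDbar_smooth hψ1).add (contDiff_const.mul hψ1)

theorem hconjψ (hψ1 : ContDiff ℝ (⊤:ℕ∞) ψ) : ContDiff ℝ (⊤:ℕ∞) (fun w => conj (ψ w)) :=
  Complex.conjCLE.toContinuousLinearMap.contDiff.comp hψ1

theorem hAA (hφs : ContDiff ℝ (⊤:ℕ∞) φ) (hψ1 : ContDiff ℝ (⊤:ℕ∞) ψ) :
    ContDiff ℝ (⊤:ℕ∞) (AA φ a ψ) :=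
  (hconjψ hψ1).mul ((hee hφs).mul (hTT hφs hψ1))

theorem hBB (hφs : ContDiff ℝ (⊤:ℕ∞) φ) (hψ1 : ContDiff ℝ (⊤:ℕ∞) ψ) :
    ContDiff ℝ (⊤:ℕ∞) (BB φ a ψ) :=
  (hconjψ hψ1).mul ((hSS hψ1).mul (hee hφs))

theorem sTT (hψ2 : HasCompactSupport ψ) : HasCompactSupport (TT φ a ψ) :=
  ((hasCompactSupport_wD hψ2).comp_left (g := Neg.neg) neg_zero).add hψ2.mul_left

theorem sSS (hψ2 : HasCompactSupport ψ) : HasCompactSupport (SS a ψ) :=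
  (hasCompactSupport_wDbar hψ2).add hψ2.mul_left

theorem sconjψ (hψ2 : HasCompactSupport ψ) : HasCompactSupport (fun w => conj (ψ w)) :=
  hψ2.comp_left (g := conj) (map_zero _)

theorem sAA (hψ2 : HasCompactSupport ψ) : HasCompactSupport (AA φ a ψ) :=
  (sconjψ hψ2).mul_right

theorem sBB (hψ2 : HasCompactSupport ψ) : HasCompactSupport (BB φ a ψ) :=
  (sconjψ hψ2).mul_right

theorem wD_ee (hφs : ContDiff ℝ (⊤:ℕ∞) φ) (z : ℂ) :
    wD (ee φ) z = -(wD (Phi φ) z) * ee φ z := by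
  have d : DifferentiableAt ℝ (fun w => -(Phi φ w)) z := (diffAt (hPhi hφs)).neg
  rw [ee_eq, wD_cexp d, wD_neg]
  ring

theorem wDbar_ee (hφs : ContDiff ℝ (⊤:ℕ∞) φ) (z : ℂ) :
    wDbar (ee φ) z = -(wDbar (Phi φ) z) * ee φ z := by
  have d : DifferentiableAt ℝ (fun w => -(Phi φ w)) z := (diffAt (hPhi hφs)).neg
  rw [ee_eq, wDbar_cexp d, wDbar_neg]
  ring

theorem conj_wD_Phi (z : ℂ) : conj (wD (Phi φ) z) = wDbar (Phi φ) z := by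
  have h : (fun w => conj (Phi φ w)) = Phi φ := funext fun w => Complex.conj_ofReal _
  rw [← wDbar_conj (f := Phi φ) (z := z), h]

theorem conj_wDbar_Phi (z : ℂ) : conj (wDbar (Phi φ) z) = wD (Phi φ) z := by
  have h : (fun w => conj (Phi φ w)) = Phi φ := funext fun w => Complex.conj_ofReal _
  rw [← wD_conj (f := Phi φ) (z := z), h]

theorem cReal (hφs : ContDiff ℝ (⊤:ℕ∞) φ) (z : ℂ) :
    ((wD (wDbar (Phi φ)) z).re : ℂ) = wD (wDbar (Phi φ)) z := by
  have h1 : (fun w => conj (wDbar (Phi φ) w)) = wD (Phi φ) :=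
    funext fun w => conj_wDbar_Phi w
  have hc : conj (wD (wDbar (Phi φ)) z) = wD (wDbar (Phi φ)) z := by
    calc conj (wD (wDbar (Phi φ)) z)
        = wDbar (fun w => conj (wDbar (Phi φ) w)) z := (wDbar_conj).symm
      _ = wDbar (wD (Phi φ)) z := by rw [h1]
      _ = wD (wDbar (Phi φ)) z := wD_wDbar_comm (hPhi hφs)
  exact Complex.conj_eq_iff_re.mp hc

theorem wDbar_TT (hφs : ContDiff ℝ (⊤:ℕ∞) φ) (hψ1 : ContDiff ℝ (⊤:ℕ∞) ψ) (z : ℂ) :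
    wDbar (TT φ a ψ) z = -(wD (wDbar ψ) z) +
      ((wD (wDbar (Phi φ)) z * ψ z) + (wD (Phi φ) z + a) * wDbar ψ z) := by
  have dψ : DifferentiableAt ℝ ψ z := diffAt hψ1
  have dwDψ : DifferentiableAt ℝ (wD ψ) z := diffAt (wD_smooth hψ1)
  have dwDPhi : DifferentiableAt ℝ (wD (Phi φ)) z := diffAt (wD_smooth (hPhi hφs))
  have e : TT φ a ψ = fun w => -(wD ψ w) + (wD (Phi φ) w + a) * ψ w := rfl
  rw [e, wDbar_add dwDψ.fun_neg ((dwDPhi.fun_add (differentiableAt_const a)).fun_mul dψ),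
    wDbar_neg, wDbar_mul (dwDPhi.fun_add (differentiableAt_const a)) dψ,
    wDbar_add dwDPhi (differentiableAt_const a), wDbar_const,
    wD_wDbar_comm hψ1, wD_wDbar_comm (hPhi hφs), add_zero]

theorem wD_SS (hψ1 : ContDiff ℝ (⊤:ℕ∞) ψ) (z : ℂ) :
    wD (SS a ψ) z = wD (wDbar ψ) z + conj a * wD ψ z := by
  have dψ : DifferentiableAt ℝ ψ z := diffAt hψ1
  have dwDbarψ : DifferentiableAt ℝ (wDbar ψ) z := diffAt (wDbar_smooth hψ1)
  have e : SS a ψ = fun w => wDbar ψ w + conj a * ψ w := rfl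
  rw [e, wD_add dwDbarψ ((differentiableAt_const (conj a)).fun_mul dψ),
    wD_mul (differentiableAt_const (conj a)) dψ, wD_const]
  ring

theorem key (hφs : ContDiff ℝ (⊤:ℕ∞) φ) (hψ1 : ContDiff ℝ (⊤:ℕ∞) ψ) (z : ℂ) :
    ((‖TT φ a ψ z‖^2 : ℝ) : ℂ) * ee φ z =
      -(wDbar (AA φ a ψ) z) - wD (BB φ a ψ) z
      + ((‖SS a ψ z‖^2 : ℝ) : ℂ) * ee φ z
      + ((‖ψ z‖^2 : ℝ) : ℂ) * (wD (wDbar (Phi φ)) z * ee φ z) := by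
  have dψ : DifferentiableAt ℝ ψ z := diffAt hψ1
  have dconjψ : DifferentiableAt ℝ (fun w => conj (ψ w)) z := diffAt (hconjψ hψ1)
  have dee : DifferentiableAt ℝ (ee φ) z := diffAt (hee hφs)
  have dTT : DifferentiableAt ℝ (TT φ a ψ) z := diffAt (hTT hφs hψ1)
  have dSS : DifferentiableAt ℝ (SS a ψ) z := diffAt (hSS hψ1)
  have eA : AA φ a ψ = fun w => conj (ψ w) * (ee φ w * TT φ a ψ w) := rfl
  have eB : BB φ a ψ = fun w => conj (ψ w) * (SS a ψ w * ee φ w) := rfl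
  simp only [coe_norm_sq]
  rw [eA, eB, wDbar_mul dconjψ (dee.fun_mul dTT), wDbar_mul dee dTT,
    wD_mul dconjψ (dSS.fun_mul dee), wD_mul dSS dee, wDbar_conj, wD_conj,
    wDbar_ee hφs z, wD_ee hφs z, wDbar_TT hφs hψ1 z, wD_SS hψ1 z]
  simp only [TT, SS, map_add, map_mul, map_neg, Complex.conj_conj, conj_wD_Phi]
  ring

end main
end APrioriAux

namespace APrioriAux
section main2
variable {φ : ℂ → ℝ} {a : ℂ} {ψ : ℂ → ℂ}

theorem L_adj (hφs : ContDiff ℝ (⊤:ℕ∞) φ) (hψ1 : ContDiff ℝ (⊤:ℕ∞) ψ) (z : ℂ) :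
    adjDbar φ 1 ψ z + a * ψ z = TT φ a ψ z := by
  have dψ : DifferentiableAt ℝ ψ z := diffAt hψ1
  have dee : DifferentiableAt ℝ (ee φ) z := diffAt (hee hφs)
  have e1 : adjDbar φ 1 ψ z =
      (-1 : ℂ) * (Real.exp (φ z) : ℂ) * wD (fun w => ψ w * ee φ w) z := by
    simp [adjDbar, ee]
  rw [e1, wD_mul dψ dee, wD_ee hφs z]
  have h1 : ((Real.exp (φ z) : ℝ) : ℂ) * ee φ z = 1 := by
    show ((Real.exp (φ z) : ℝ) : ℂ) * ((Real.exp (-φ z) : ℝ) : ℂ) = 1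
    rw [← Complex.ofReal_mul, ← Real.exp_add]
    simp
  have e2 : TT φ a ψ z = -(wD ψ z) + (wD (Phi φ) z + a) * ψ z := rfl
  rw [e2]
  linear_combination (ψ z * wD (Phi φ) z - wD ψ z) * h1

theorem key_integral (hφs : ContDiff ℝ (⊤:ℕ∞) φ) (hψ1 : ContDiff ℝ (⊤:ℕ∞) ψ)
    (hψ2 : HasCompactSupport ψ) :
    (∫ z, ‖TT φ a ψ z‖^2 * Real.exp (-φ z)) =
      (∫ z, ‖SS a ψ z‖^2 * Real.exp (-φ z)) +
      ∫ z, ‖ψ z‖^2 * (wD (wDbar (Phi φ)) z).re * Real.exp (-φ z) := by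
  -- integrability of the four complex pieces
  have heec : Continuous (ee φ) := (hee hφs).continuous
  have hsq : ∀ (g : ℂ → ℂ), Continuous g → (fun x : ℂ => ((‖g x‖^2 : ℝ) : ℂ)) =
      (fun x : ℂ => ((‖x‖^2 : ℝ) : ℂ)) ∘ g := fun g _ => rfl
  have iT : Integrable (fun z => ((‖TT φ a ψ z‖^2 : ℝ) : ℂ) * ee φ z) volume := by
    apply integrable_cc
    · exact (Complex.continuous_ofReal.comp ((hTT hφs hψ1).continuous.norm.pow 2)).mul heec
    · exact (((sTT hψ2).comp_left (g := fun x : ℂ => ((‖x‖^2 : ℝ) : ℂ)) (by simp)).mul_right)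
  have iS : Integrable (fun z => ((‖SS a ψ z‖^2 : ℝ) : ℂ) * ee φ z) volume := by
    apply integrable_cc
    · exact (Complex.continuous_ofReal.comp ((hSS hψ1).continuous.norm.pow 2)).mul heec
    · exact (((sSS hψ2).comp_left (g := fun x : ℂ => ((‖x‖^2 : ℝ) : ℂ)) (by simp)).mul_right)
  have iY : Integrable (fun z => ((‖ψ z‖^2 : ℝ) : ℂ) * (wD (wDbar (Phi φ)) z * ee φ z)) volume := by
    apply integrable_cc
    · exact (Complex.continuous_ofReal.comp (hψ1.continuous.norm.pow 2)).mul
        (((wD_smooth (wDbar_smooth (hPhi hφs))).continuous).mul heec)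
    · exact ((hψ2.comp_left (g := fun x : ℂ => ((‖x‖^2 : ℝ) : ℂ)) (by simp)).mul_right)
  have iA : Integrable (fun z => wDbar (AA φ a ψ) z) volume :=
    integrable_cc (wDbar_smooth (hAA hφs hψ1)).continuous (hasCompactSupport_wDbar (sAA hψ2))
  have iB : Integrable (fun z => wD (BB φ a ψ) z) volume :=
    integrable_cc (wD_smooth (hBB hφs hψ1)).continuous (hasCompactSupport_wD (sBB hψ2))
  have zeroA : (∫ z, wDbar (AA φ a ψ) z) = 0 :=
    integral_wDbar_eq_zero (hAA hφs hψ1) (sAA hψ2)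
  have zeroB : (∫ z, wD (BB φ a ψ) z) = 0 :=
    integral_wD_eq_zero (hBB hφs hψ1) (sBB hψ2)
  have hsplit : (∫ z, ((‖TT φ a ψ z‖^2 : ℝ) : ℂ) * ee φ z)
      = -(∫ z, wDbar (AA φ a ψ) z) - (∫ z, wD (BB φ a ψ) z)
        + (∫ z, ((‖SS a ψ z‖^2 : ℝ) : ℂ) * ee φ z)
        + ∫ z, ((‖ψ z‖^2 : ℝ) : ℂ) * (wD (wDbar (Phi φ)) z * ee φ z) := by
    calc (∫ z, ((‖TT φ a ψ z‖^2 : ℝ) : ℂ) * ee φ z)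
        = ∫ z, (-(wDbar (AA φ a ψ) z) - wD (BB φ a ψ) z
            + ((‖SS a ψ z‖^2 : ℝ) : ℂ) * ee φ z
            + ((‖ψ z‖^2 : ℝ) : ℂ) * (wD (wDbar (Phi φ)) z * ee φ z)) := by
          exact integral_congr_ae (Filter.Eventually.of_forall fun z => key hφs hψ1 z)
      _ = _ := by
          have j1 : Integrable (fun z => -(wDbar (AA φ a ψ) z)) volume := iA.neg
          have j2 : Integrable
              (fun z => -(wDbar (AA φ a ψ) z) - wD (BB φ a ψ) z) volume := j1.sub iB
          have j3 : Integrable (fun z => -(wDbar (AA φ a ψ) z) - wD (BB φ a ψ) z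
              + ((‖SS a ψ z‖^2 : ℝ) : ℂ) * ee φ z) volume := j2.add iS
          rw [integral_add j3 iY, integral_add j2 iS, integral_sub j1 iB, integral_neg]
  rw [zeroA, zeroB] at hsplit
  simp only [neg_zero, sub_zero, zero_add] at hsplit
  -- convert to real integrals
  have cT : (∫ z, ((‖TT φ a ψ z‖^2 : ℝ) : ℂ) * ee φ z)
      = ((∫ z, ‖TT φ a ψ z‖^2 * Real.exp (-φ z) : ℝ) : ℂ) := by
    rw [show (fun z => ((‖TT φ a ψ z‖^2 : ℝ) : ℂ) * ee φ z)
        = fun z => (((‖TT φ a ψ z‖^2 * Real.exp (-φ z)) : ℝ) : ℂ) from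
      funext fun z => by rw [Complex.ofReal_mul]; rfl]
    exact integral_ofReal
  have cS : (∫ z, ((‖SS a ψ z‖^2 : ℝ) : ℂ) * ee φ z)
      = ((∫ z, ‖SS a ψ z‖^2 * Real.exp (-φ z) : ℝ) : ℂ) := by
    rw [show (fun z => ((‖SS a ψ z‖^2 : ℝ) : ℂ) * ee φ z)
        = fun z => (((‖SS a ψ z‖^2 * Real.exp (-φ z)) : ℝ) : ℂ) from
      funext fun z => by rw [Complex.ofReal_mul]; rfl]
    exact integral_ofReal
  have cY : (∫ z, ((‖ψ z‖^2 : ℝ) : ℂ) * (wD (wDbar (Phi φ)) z * ee φ z))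
      = ((∫ z, ‖ψ z‖^2 * (wD (wDbar (Phi φ)) z).re * Real.exp (-φ z) : ℝ) : ℂ) := by
    rw [show (fun z => ((‖ψ z‖^2 : ℝ) : ℂ) * (wD (wDbar (Phi φ)) z * ee φ z))
        = fun z => (((‖ψ z‖^2 * (wD (wDbar (Phi φ)) z).re * Real.exp (-φ z)) : ℝ) : ℂ) from
      funext fun z => by
        rw [Complex.ofReal_mul, Complex.ofReal_mul, cReal hφs z]
        simp only [ee]
        ring]
    exact integral_ofReal
  rw [cT, cS, cY] at hsplit
  exact_mod_cast hsplit

end main2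
end APrioriAux

/-- The estimate `‖(∂̄^* _φ + a)ψ‖²_φ ≥ ∫ |ψ|² (∂∂̄φ) e^{-φ} dσ` for a smooth
nonnegative weight `φ` and every test function `ψ`.  Since `φ` is real-valued,
`∂∂̄φ` is real-valued, and we take its real part. -/
theorem a_priori_estimate_general (φ : ℂ → ℝ) (hφs : ContDiff ℝ (⊤ : ℕ∞) φ)
    (hφ0 : ∀ z, 0 ≤ φ z) (a : ℂ) (ψ : ℂ → ℂ)
    (hψ1 : ContDiff ℝ (⊤ : ℕ∞) ψ) (hψ2 : HasCompactSupport ψ) :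
    ∫ z, ‖ψ z‖ ^ 2 * (wD (wDbar (fun w => (φ w : ℂ))) z).re * Real.exp (-φ z) ≤
      ∫ z, ‖adjDbar φ 1 ψ z + a * ψ z‖ ^ 2 * Real.exp (-φ z) := by
  have hR : (fun z => ‖adjDbar φ 1 ψ z + a * ψ z‖ ^ 2 * Real.exp (-φ z))
      = fun z => ‖APrioriAux.TT φ a ψ z‖ ^ 2 * Real.exp (-φ z) :=
    funext fun z => by rw [APrioriAux.L_adj hφs hψ1 z]
  have hL : (fun w => ((φ w : ℝ) : ℂ)) = APrioriAux.Phi φ := rfl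
  rw [hR, hL]
  have hk := APrioriAux.key_integral (a := a) hφs hψ1 hψ2
  have hnn : 0 ≤ ∫ z, ‖APrioriAux.SS a ψ z‖ ^ 2 * Real.exp (-φ z) :=
    integral_nonneg fun z => mul_nonneg (pow_two_nonneg _) (Real.exp_pos _).le
  linarith [hk, hnn]
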